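/- Let I ⊆ ℝ be an interval, ε ∈ ℝ, and let γ : I → (0, ∞) be twice differentiable satisfying (γ³ + 1/2)·γ·γ'' − (3/4)·(γ')² + ε²·γ⁴ = 0 on I. Then the function E(t) := (1 + 1/(2γ(t)³))·(γ'(t))² + 2ε²·γ(t) is constant on I. Consequently, writing E ≡ 2C, one has (γ'(t))² = 2γ(t)³(C − ε²γ(t))/(γ(t)³ + 1/2) for all t ∈ I, and if ε ≠ 0 then γ(t) ≤ C/ε² for all t ∈ I. -/

import Mathlib

/-- First integral of the `γ`-ODE `(γ³ + 1/2)γγ'' - (3/4)(γ')² + ε²γ⁴ = 0`: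
the energy `E = (1 + 1/(2γ³))(γ')² + 2ε²γ` is constant; writing `E ≡ 2C`,
`(γ')² = 2γ³(C - ε²γ)/(γ³ + 1/2)`, and if `ε ≠ 0` then `γ ≤ C/ε²`. -/
theorem stmt_18 (I : Set ℝ) (hI : Convex ℝ I) (ε : ℝ)
    (γ γ' γ'' : ℝ → ℝ)
    (hγpos : ∀ t ∈ I, 0 < γ t)
    (hγ : ∀ t ∈ I, HasDerivWithinAt γ (γ' t) I t)
    (hγ2 : ∀ t ∈ I, HasDerivWithinAt γ' (γ'' t) I t)
    (hode : ∀ t ∈ I,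
      (γ t ^ 3 + 1 / 2) * γ t * γ'' t - 3 / 4 * γ' t ^ 2 + ε ^ 2 * γ t ^ 4 = 0)
    (E : ℝ → ℝ)
    (hE : ∀ t, E t = (1 + 1 / (2 * γ t ^ 3)) * γ' t ^ 2 + 2 * ε ^ 2 * γ t) :
    ∀ t₀ ∈ I, ∀ t ∈ I,
      E t = E t₀ ∧
      γ' t ^ 2 = 2 * γ t ^ 3 * (E t₀ / 2 - ε ^ 2 * γ t) / (γ t ^ 3 + 1 / 2) ∧
      (ε ≠ 0 → γ t ≤ E t₀ / 2 / ε ^ 2) := by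
  have hEfun : E = fun t => (1 + 1 / (2 * γ t ^ 3)) * γ' t ^ 2 + 2 * ε ^ 2 * γ t :=
    funext hE
  have hD : ∀ t ∈ I, HasDerivWithinAt E 0 I t := by
    intro t ht
    have hγt := hγpos t ht
    have hne : (2 * γ t ^ 3) ≠ 0 := by positivity
    have h3 : HasDerivWithinAt (fun s => 2 * γ s ^ 3) (2 * (3 * γ t ^ 2 * γ' t)) I t :=
      ((hγ t ht).pow 3).const_mul 2
    have hinv : HasDerivWithinAt (fun s => 1 / (2 * γ s ^ 3))
        (-(2 * (3 * γ t ^ 2 * γ' t)) / (2 * γ t ^ 3) ^ 2) I t := by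
      simpa only [one_div, Pi.inv_def] using h3.inv hne
    have hsq : HasDerivWithinAt (fun s => γ' s ^ 2) (2 * γ' t ^ 1 * γ'' t) I t :=
      (hγ2 t ht).pow 2
    have hmain : HasDerivWithinAt E
        ((0 + -(2 * (3 * γ t ^ 2 * γ' t)) / (2 * γ t ^ 3) ^ 2) * γ' t ^ 2
          + (1 + 1 / (2 * γ t ^ 3)) * (2 * γ' t ^ 1 * γ'' t)
          + 2 * ε ^ 2 * γ' t) I t := by
      rw [hEfun]
      exact (((hasDerivWithinAt_const t I (1:ℝ)).add hinv).mul hsq).add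
        (((hγ t ht).const_mul (2 * ε ^ 2)))
    have hzero : (0 + -(2 * (3 * γ t ^ 2 * γ' t)) / (2 * γ t ^ 3) ^ 2) * γ' t ^ 2
          + (1 + 1 / (2 * γ t ^ 3)) * (2 * γ' t ^ 1 * γ'' t)
          + 2 * ε ^ 2 * γ' t = 0 := by
      have hod := hode t ht
      have hg : γ t ≠ 0 := ne_of_gt hγt
      field_simp
      linear_combination (4 * γ' t) * hod
    rwa [hzero] at hmain
  intro t₀ ht₀ t ht
  have hconst : E t = E t₀ := by
    have := hI.norm_image_sub_le_of_norm_hasDerivWithin_le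
      (f' := fun _ => (0:ℝ)) (C := 0) (fun s hs => hD s hs)
      (fun s _ => by simp) ht₀ ht
    simp only [Real.norm_eq_abs] at this
    have : |E t - E t₀| ≤ 0 := by simpa using this
    have := abs_nonpos_iff.mp (le_of_not_gt (fun h => absurd this (not_le_of_gt h)))
    linarith [sub_eq_zero.mp this]
  refine ⟨hconst, ?_, ?_⟩
  · have hg0 : 0 < γ t := hγpos t ht
    have hg : γ t ≠ 0 := ne_of_gt hg0
    have h1 : (1 + 1 / (2 * γ t ^ 3)) * γ' t ^ 2 + 2 * ε ^ 2 * γ t = E t₀ := by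
      rw [← hE t]; exact hconst
    have hden : γ t ^ 3 + 1 / 2 ≠ 0 := by positivity
    field_simp at h1 ⊢
    linear_combination h1
  · intro hε
    have hg : 0 < γ t := hγpos t ht
    have h1 : (1 + 1 / (2 * γ t ^ 3)) * γ' t ^ 2 + 2 * ε ^ 2 * γ t = E t₀ := by
      rw [← hE t]; exact hconst
    have hsq : 0 ≤ γ' t ^ 2 := sq_nonneg _
    have hfac : 0 < 1 + 1 / (2 * γ t ^ 3) := by positivity
    have h2 : 2 * ε ^ 2 * γ t ≤ E t₀ := by nlinarith
    have hε2 : 0 < ε ^ 2 := by positivity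
    rw [div_div, le_div_iff₀ (by positivity)]
    linarith
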